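/- Let b ∈ ℝ⁷ with rank M(b) = 3. Then the 5×4 real matrix with rows (b₄, 0, 1, 0), (0, b₄, 0, 1), (b₅, 0, b₁, 0), (b₆, b₅, b₂, b₁), (0, b₆, 0, b₂) has trivial kernel (i.e. has rank 4): if (α₁, α₂, α₅, α₆) ∈ ℝ⁴ is mapped to 0 by this matrix, then α₁ = α₂ = α₅ = α₆ = 0. -/

import Mathlib

open Matrix

/-- The 3×4 camera matrix `M(b)` with rows `(1, b₁, b₂, b₃)`, `(b₄, b₅, b₆, b₇)`,
`(0, 0, 0, 1)`. -/
def Mcam (b : Fin 7 → ℝ) : Matrix (Fin 3) (Fin 4) ℝ :=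
  !![1, b 0, b 1, b 2; b 3, b 4, b 5, b 6; 0, 0, 0, 1]

/-- If `rank M(b) = 3`, the 5×4 matrix with rows `(b₄, 0, 1, 0)`, `(0, b₄, 0, 1)`,
`(b₅, 0, b₁, 0)`, `(b₆, b₅, b₂, b₁)`, `(0, b₆, 0, b₂)` has trivial kernel
(i.e. it has rank 4). -/
theorem coefficient_matrix_trivial_kernel
    (b : Fin 7 → ℝ) (hrank : (Mcam b).rank = 3) (α : Fin 4 → ℝ)
    (h : (!![b 3, 0, 1, 0;
             0, b 3, 0, 1;
             b 4, 0, b 0, 0;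
             b 5, b 4, b 1, b 0;
             0, b 5, 0, b 1] : Matrix (Fin 5) (Fin 4) ℝ).mulVec α = 0) :
    α = 0 := by
  -- rank condition implies (b4 - b0*b3, b5 - b1*b3) ≠ 0
  have key : b 4 - b 0 * b 3 ≠ 0 ∨ b 5 - b 1 * b 3 ≠ 0 := by
    by_contra hc
    push_neg at hc
    obtain ⟨hu, hv⟩ := hc
    have hu' : b 4 = b 0 * b 3 := by linarith
    have hv' : b 5 = b 1 * b 3 := by linarith
    have hfac : Mcam b =
        (!![1, 0; b 3, b 6 - b 3 * b 2; 0, 1] : Matrix (Fin 3) (Fin 2) ℝ) *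
        (!![1, b 0, b 1, b 2; 0, 0, 0, 1] : Matrix (Fin 2) (Fin 4) ℝ) := by
      ext i j
      fin_cases i <;> fin_cases j <;>
        simp [Mcam, Matrix.mul_apply, Fin.sum_univ_succ, hu', hv'] <;> ring
    have h2 : (Mcam b).rank ≤ 2 := by
      rw [hfac]
      refine le_trans (Matrix.rank_mul_le_right _ _) ?_
      simpa using Matrix.rank_le_card_height
        (!![1, b 0, b 1, b 2; 0, 0, 0, 1] : Matrix (Fin 2) (Fin 4) ℝ)
    omega
  have h0 := congrFun h 0
  have h1 := congrFun h 1
  have h2 := congrFun h 2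
  have h3 := congrFun h 3
  have h4 := congrFun h 4
  simp [Matrix.mulVec, dotProduct, Fin.sum_univ_succ] at h0 h1 h2 h3 h4
  have hα0 : α 0 = 0 ∧ α 1 = 0 := by
    rcases key with hk | hk
    · have e0 : (b 4 - b 0 * b 3) * α 0 = 0 := by linear_combination h2 - b 0 * h0
      have a0 : α 0 = 0 := by
        rcases mul_eq_zero.mp e0 with h' | h'; exact absurd h' hk; exact h'
      have e1 : (b 4 - b 0 * b 3) * α 1 = 0 := by
        linear_combination h3 - b 0 * h1 - b 1 * h0 - (b 5 - b 1 * b 3) * a0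
      have a1 : α 1 = 0 := by
        rcases mul_eq_zero.mp e1 with h' | h'; exact absurd h' hk; exact h'
      exact ⟨a0, a1⟩
    · have e1 : (b 5 - b 1 * b 3) * α 1 = 0 := by linear_combination h4 - b 1 * h1
      have a1 : α 1 = 0 := by
        rcases mul_eq_zero.mp e1 with h' | h'; exact absurd h' hk; exact h'
      have e0 : (b 5 - b 1 * b 3) * α 0 = 0 := by
        linear_combination h3 - b 1 * h0 - b 0 * h1 - (b 4 - b 0 * b 3) * a1
      have a0 : α 0 = 0 := by
        rcases mul_eq_zero.mp e0 with h' | h'; exact absurd h' hk; exact h'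
      exact ⟨a0, a1⟩
  obtain ⟨a0, a1⟩ := hα0
  funext i
  fin_cases i
  · exact a0

  · exact a1
  · show α 2 = 0
    linear_combination h0 - b 3 * a0
  · show α 3 = 0
    linear_combination h1 - b 3 * a1
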